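/- Let K_1,...,K_n be i.i.d. ℕ-valued random variables with law Q(y) and let μ be a finite measure on [0,1]. Then for every x in [0,1] and n ∈ ℕ: ∫ [ (E[x^{K_y}])^n − x^n ] μ(dy) = ∫ [ ∑_{k=n}^∞ P(∑_{j=1}^n K_{y,j} = k)·(x^k − x^n) ] μ(dy), i.e. the rare-selection generator applied to x ↦ x^n equals the branching generator of the dual chain applied to n ↦ x^n. -/

import Mathlib

open MeasureTheory ProbabilityTheory Set

lemma aux_integral_prod {Ω ι : Type*} [MeasureSpace Ω]
    [IsProbabilityMeasure (ℙ : Measure Ω)] (f : ι → Ω → ℝ)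
    (hm : ∀ i, Measurable (f i)) (hb : ∀ i ω, |f i ω| ≤ 1)
    (hind : iIndepFun f ℙ)
    (s : Finset ι) :
    ∫ ω, ∏ i ∈ s, f i ω ∂ℙ = ∏ i ∈ s, ∫ ω, f i ω ∂ℙ := by
  classical
  have hint : ∀ (g : Ω → ℝ), Measurable g → (∀ ω, |g ω| ≤ 1) → Integrable g ℙ := by
    intro g hgm hgb
    exact (integrable_const (1 : ℝ)).mono' hgm.aestronglyMeasurable
      (Filter.Eventually.of_forall (fun ω => by simpa [Real.norm_eq_abs] using hgb ω))
  induction s using Finset.induction_on with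
  | empty => simp
  | @insert a s hi ih =>
    have hprodfn : (∏ j ∈ s, f j : Ω → ℝ) = fun ω => ∏ i ∈ s, f i ω :=
      funext fun ω => Finset.prod_apply ω s f
    have hprodmeas : Measurable (fun ω => ∏ i ∈ s, f i ω) :=
      Finset.measurable_prod _ (fun i _ => hm i)
    have hprodbd : ∀ ω, |∏ i ∈ s, f i ω| ≤ 1 := by
      intro ω
      rw [Finset.abs_prod]
      exact Finset.prod_le_one (fun i _ => abs_nonneg _) (fun i _ => hb i ω)
    have hintprod : Integrable (∏ j ∈ s, f j) ℙ := by
      rw [hprodfn]; exact hint _ hprodmeas hprodbd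
    have hIF : IndepFun (∏ j ∈ s, f j) (f a) ℙ :=
      hind.indepFun_finsetProd_of_notMem hm hi
    have h3 := hIF.symm.integral_mul_eq_mul_integral (hint _ (hm a) (hb a)).aestronglyMeasurable hintprod.aestronglyMeasurable
    rw [hprodfn] at h3
    have h4 : (f a * fun ω => ∏ i ∈ s, f i ω) = fun ω => f a ω * ∏ i ∈ s, f i ω := rfl
    rw [h4] at h3
    simp_rw [Finset.prod_insert hi]
    rw [← ih]
    exact h3

theorem stmt4 {Ω : Type*} [MeasureSpace Ω] [IsProbabilityMeasure (ℙ : Measure Ω)]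
    (n : ℕ) (hn : 1 ≤ n) (μ : Measure ℝ) [IsFiniteMeasure μ]
    (hμsupp : μ (Set.Icc (0:ℝ) 1)ᶜ = 0)
    (K : ℝ → Fin n → Ω → ℕ) (K0 : ℝ → Ω → ℕ)
    (hK1 : ∀ y i ω, 1 ≤ K y i ω) (hmeas : ∀ y i, Measurable (K y i))
    (hmeas0 : ∀ y, Measurable (K0 y))
    (hindep : ∀ y, iIndepFun (K y) ℙ)
    (hident : ∀ y i, Measure.map (K y i) ℙ = Measure.map (K0 y) ℙ)
    (x : ℝ) (hx : x ∈ Set.Icc (0:ℝ) 1) :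
    ∫ y, ((∫ ω, x ^ K0 y ω ∂ℙ) ^ n - x ^ n) ∂μ
      = ∫ y, ∑' k : ℕ, (ℙ {ω | (∑ i, K y i ω) = n + k}).toReal * (x ^ (n + k) - x ^ n) ∂μ := by
  obtain ⟨hx0, hx1⟩ := hx
  have hxk : ∀ k : ℕ, |x ^ k| ≤ 1 := by
    intro k
    rw [abs_pow]
    exact pow_le_one₀ (abs_nonneg x) (by rwa [abs_of_nonneg hx0])
  have hxk0 : ∀ k : ℕ, 0 ≤ x ^ k := fun k => pow_nonneg hx0 k
  have hxkle : ∀ k : ℕ, x ^ k ≤ 1 := fun k => by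
    have := hxk k; rwa [abs_of_nonneg (hxk0 k)] at this
  refine integral_congr_ae (Filter.Eventually.of_forall fun y => ?_)
  dsimp only
  set S : Ω → ℕ := fun ω => ∑ i, K y i ω with hSdef
  have hSmeas : Measurable S := Finset.measurable_sum _ (fun i _ => hmeas y i)
  have hSn : ∀ ω, n ≤ S ω := by
    intro ω
    calc n = ∑ _i : Fin n, 1 := by simp
    _ ≤ S ω := Finset.sum_le_sum (fun i _ => hK1 y i ω)
  -- probabilities
  set p : ℕ → ℝ := fun k => (ℙ {ω | S ω = k}).toReal with hpdef
  have hsetmeas : ∀ k : ℕ, MeasurableSet {ω | S ω = k} := fun k =>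
    hSmeas (measurableSet_singleton k)
  have hpdisj : Pairwise (Function.onFun Disjoint fun k : ℕ => {ω | S ω = k}) := by
    intro i j hij
    simp only [Function.onFun, Set.disjoint_left]
    rintro ω hi hj
    exact hij (hi.symm.trans hj)
  have hpsummable : Summable p := by
    exact summable_measure_toReal (fun k => hsetmeas k) hpdisj
  have hpnonneg : ∀ k, 0 ≤ p k := fun k => ENNReal.toReal_nonneg
  have hptsum : ∑' k, p k = 1 := by
    have h1 : ∑' k : ℕ, ℙ {ω | S ω = k} = ℙ (⋃ k : ℕ, {ω | S ω = k}) :=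
      (measure_iUnion hpdisj (fun k => hsetmeas k)).symm
    have h2 : (⋃ k : ℕ, {ω | S ω = k}) = Set.univ := by
      ext ω; simp
    have h3 : ∑' k : ℕ, ℙ {ω | S ω = k} = 1 := by rw [h1, h2, measure_univ]
    rw [hpdef]
    rw [← ENNReal.tsum_toReal_eq (fun k => measure_ne_top _ _), h3, ENNReal.toReal_one]
  have hpzero : ∀ k < n, p k = 0 := by
    intro k hk
    have : {ω | S ω = k} = ∅ := by
      ext ω
      simp only [Set.mem_setOf_eq, Set.mem_empty_iff_false, iff_false]
      intro h
      exact absurd (h ▸ hSn ω) (not_le.mpr hk)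
    simp [hpdef, this]
  -- LHS: (∫ x^K0)^n = ∫ x^S
  have hmap : ∀ i, ∫ ω, x ^ K0 y ω ∂ℙ = ∫ ω, x ^ K y i ω ∂ℙ := by
    intro i
    rw [← integral_map (hmeas0 y).aemeasurable
        (f := fun k : ℕ => x ^ k) measurable_from_nat.aestronglyMeasurable,
      ← hident y i,
      integral_map (hmeas y i).aemeasurable (by measurability)]
  have hprod : (∫ ω, x ^ K0 y ω ∂ℙ) ^ n = ∫ ω, x ^ S ω ∂ℙ := by
    have hcomp : iIndepFun
        (fun i ω => x ^ K y i ω) ℙ := by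
      exact (hindep y).comp (fun i (k : ℕ) => x ^ k) (fun i => measurable_from_nat)
    have := aux_integral_prod (fun i ω => x ^ K y i ω)
      (fun i => measurable_from_nat.comp (hmeas y i)) (fun i ω => hxk _) hcomp Finset.univ
    calc (∫ ω, x ^ K0 y ω ∂ℙ) ^ n
        = ∏ i : Fin n, ∫ ω, x ^ K y i ω ∂ℙ := by
          rw [Finset.prod_congr rfl (fun i _ => (hmap i).symm)]
          simp
      _ = ∫ ω, ∏ i : Fin n, x ^ K y i ω ∂ℙ := this.symm
      _ = ∫ ω, x ^ S ω ∂ℙ := by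
          congr 1; ext ω; rw [hSdef, ← Finset.prod_pow_eq_pow_sum]
  -- ∫ x^S = ∑' k, p k * x^k
  have hintS : ∫ ω, x ^ S ω ∂ℙ = ∑' k : ℕ, p k * x ^ k := by
    have hmapS : IsProbabilityMeasure (Measure.map S ℙ) := Measure.isProbabilityMeasure_map hSmeas.aemeasurable
    rw [← integral_map hSmeas.aemeasurable (f := fun k : ℕ => x ^ k) measurable_from_nat.aestronglyMeasurable]
    rw [integral_countable' ((integrable_const (1 : ℝ)).mono'
      measurable_from_nat.aestronglyMeasurable
      (Filter.Eventually.of_forall (fun k => by simpa [Real.norm_eq_abs] using hxk k)))]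
    refine tsum_congr fun k => ?_
    rw [map_measureReal_apply hSmeas (measurableSet_singleton k)]
    simp only [hpdef, smul_eq_mul]
    congr 1
  -- summabilities
  have hs1 : Summable (fun k => p k * x ^ k) := by
    refine Summable.of_nonneg_of_le (fun k => mul_nonneg (hpnonneg k) (hxk0 k)) (fun k => ?_)
      hpsummable
    calc p k * x ^ k ≤ p k * 1 := mul_le_mul_of_nonneg_left (hxkle k) (hpnonneg k)
    _ = p k := mul_one _
  have hs2 : Summable (fun k => p k * x ^ n) := hpsummable.mul_right _
  have hg : Summable (fun k => p k * (x ^ k - x ^ n)) := by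
    have : (fun k => p k * (x ^ k - x ^ n)) = fun k => p k * x ^ k - p k * x ^ n := by
      ext k; ring
    rw [this]
    exact hs1.sub hs2
  -- assemble
  have key : ∑' k : ℕ, p (n + k) * (x ^ (n + k) - x ^ n)
      = (∑' k : ℕ, p k * x ^ k) - x ^ n := by
    have hshift := Summable.sum_add_tsum_nat_add (f := fun k => p k * (x ^ k - x ^ n)) n hg
    have hzero : ∑ i ∈ Finset.range n, p i * (x ^ i - x ^ n) = 0 :=
      Finset.sum_eq_zero (fun i hi => by
        rw [hpzero i (Finset.mem_range.mp hi), zero_mul])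
    have h1 : ∑' k : ℕ, p (n + k) * (x ^ (n + k) - x ^ n)
        = ∑' k : ℕ, p k * (x ^ k - x ^ n) := by
      rw [← hshift, hzero, zero_add]
      refine tsum_congr fun k => ?_
      rw [add_comm n k]
    rw [h1]
    have h2 : ∑' k : ℕ, p k * (x ^ k - x ^ n)
        = (∑' k : ℕ, p k * x ^ k) - ∑' k : ℕ, p k * x ^ n := by
      rw [← Summable.tsum_sub hs1 hs2]
      exact tsum_congr fun k => by ring
    rw [h2, tsum_mul_right, hptsum, one_mul]
  rw [hprod, hintS, ← key]
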